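/- Let $p$ be an odd prime and $V$ a vector space of dimension $p$ over an algebraically closed field $k$ of characteristic zero. If $T$ is a linear endomorphism of $V$ with $T^{2p} = \mathrm{id}$ and $\mathrm{Tr}(T) = 0$, then $T^p = \mathrm{id}$ or $T^p = -\mathrm{id}$. -/

import Mathlib

open Polynomial Finset
lemma const_of_sum_zeta {k : Type*} [Field k] [CharZero k] {p : ℕ} (hp : p.Prime)
    {ζ : k} (hζ : IsPrimitiveRoot ζ p) (m : ℕ → ℤ)
    (hsum : ∑ j ∈ Finset.range p, (m j : k) * ζ ^ j = 0) :
    ∀ j ∈ Finset.range p, m j = m (p - 1) := by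
  have hp1 : 1 < p := hp.one_lt
  have hpos : 0 < p := hp.pos
  -- the candidate vanishing polynomial over ℚ
  set q : ℚ[X] := ∑ j ∈ Finset.range (p - 1), C ((m j : ℚ) - (m (p - 1) : ℚ)) * X ^ j with hq
  have haev : aeval ζ q = 0 := by
    have hgeom : ∑ i ∈ Finset.range p, ζ ^ i = 0 := hζ.geom_sum_eq_zero hp1
    have hsplit : (∑ j ∈ Finset.range p, ((m j : k) - (m (p - 1) : k)) * ζ ^ j) = 0 := by
      have : ∑ j ∈ Finset.range p, ((m j : k) - (m (p - 1) : k)) * ζ ^ j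
          = (∑ j ∈ Finset.range p, (m j : k) * ζ ^ j)
            - (m (p - 1) : k) * ∑ j ∈ Finset.range p, ζ ^ j := by
        rw [Finset.mul_sum, ← Finset.sum_sub_distrib]
        exact Finset.sum_congr rfl fun j _ => by ring
      rw [this, hsum, hgeom, mul_zero, sub_zero]
    have hrange : p = (p - 1) + 1 := (Nat.succ_pred_eq_of_pos hpos).symm
    have hsplit2 : (∑ j ∈ Finset.range (p - 1), ((m j : k) - (m (p - 1) : k)) * ζ ^ j) = 0 := by
      have hstep : (∑ j ∈ Finset.range p, ((m j : k) - (m (p - 1) : k)) * ζ ^ j)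
          = (∑ j ∈ Finset.range (p - 1), ((m j : k) - (m (p - 1) : k)) * ζ ^ j)
            + ((m (p - 1) : k) - (m (p - 1) : k)) * ζ ^ (p - 1) := by
        conv_lhs => rw [hrange]
        rw [Finset.sum_range_succ]
        simp only [Nat.add_sub_cancel]
      rw [hstep, sub_self, zero_mul, add_zero] at hsplit
      exact hsplit
    simp only [hq, map_sum, map_mul, map_pow, aeval_C, aeval_X, eq_ratCast,
      Rat.cast_sub, Rat.cast_intCast]
    exact hsplit2
  have hq0 : q = 0 := by
    by_contra hne
    have hmin : minpoly ℚ ζ = cyclotomic p ℚ := (cyclotomic_eq_minpoly_rat hζ hpos).symm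
    have hdegmin : (minpoly ℚ ζ).degree = ((p - 1 : ℕ) : WithBot ℕ) := by
      rw [hmin, degree_cyclotomic, Nat.totient_prime hp]
    have hle := minpoly.degree_le_of_ne_zero ℚ ζ hne haev
    have hdq : q.degree < ((p - 1 : ℕ) : WithBot ℕ) := by
      refine lt_of_le_of_lt (Polynomial.degree_sum_le _ _) ?_
      rw [Finset.sup_lt_iff (by exact_mod_cast WithBot.bot_lt_coe _)]
      intro j hj
      refine lt_of_le_of_lt (Polynomial.degree_C_mul_X_pow_le _ _) ?_
      exact_mod_cast Finset.mem_range.mp hj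
    rw [hdegmin] at hle
    exact absurd (lt_of_le_of_lt hle hdq) (lt_irrefl _)
  intro j hj
  rcases Nat.lt_or_ge j (p - 1) with h | h
  · have hcoeff : q.coeff j = (m j : ℚ) - (m (p - 1) : ℚ) := by
      rw [hq, Polynomial.finset_sum_coeff]
      rw [Finset.sum_eq_single j]
      · rw [Polynomial.coeff_C_mul, Polynomial.coeff_X_pow, if_pos rfl, mul_one]
      · intro b _ hbj
        rw [Polynomial.coeff_C_mul, Polynomial.coeff_X_pow, if_neg (fun h => hbj h.symm), mul_zero]
      · intro hjmem
        exact absurd (Finset.mem_range.mpr h) hjmem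
    rw [hq0] at hcoeff
    have : (m j : ℚ) = (m (p - 1) : ℚ) := by
      have := hcoeff.symm
      simpa [sub_eq_zero] using this
    exact_mod_cast this
  · have : j = p - 1 := le_antisymm (Nat.le_sub_one_of_lt (Finset.mem_range.mp hj)) h
    rw [this]




lemma eigen_pow_apply {k V : Type*} [Field k] [AddCommGroup V] [Module k V]
    (T : Module.End k V) (μ : k) (n : ℕ) {v : V} (hv : v ∈ T.eigenspace μ) :
    (T ^ n) v = μ ^ n • v := by
  induction n with
  | zero => simp
  | succ n ih =>
    rw [pow_succ', Module.End.mul_apply, ih, map_smul, Module.End.mem_eigenspace_iff.mp hv,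
      smul_smul, ← pow_succ]

theorem stmt_1 {k : Type*} [Field k] [IsAlgClosed k] [CharZero k]
    {V : Type*} [AddCommGroup V] [Module k V]
    (p : ℕ) (hp : p.Prime) (hodd : Odd p)
    (hdim : Module.finrank k V = p)
    (T : Module.End k V) (hT : T ^ (2 * p) = 1) (htr : LinearMap.trace k V T = 0) :
    T ^ p = 1 ∨ T ^ p = -1 := by
  classical
  have hpos : 0 < p := hp.pos
  haveI : FiniteDimensional k V := Module.finite_of_finrank_pos (hdim ▸ hpos)
  have h2p : (2 * p : ℕ) ≠ 0 := by positivity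
  -- T is semisimple
  have hsf : Squarefree (X ^ (2 * p) - C (1 : k)) :=
    (Polynomial.separable_X_pow_sub_C (1 : k) (by exact_mod_cast h2p) one_ne_zero).squarefree
  have haevT : aeval T (X ^ (2 * p) - C (1 : k)) = 0 := by
    simp [hT]
  have hss : T.IsSemisimple := Module.End.isSemisimple_of_squarefree_aeval_eq_zero hsf haevT
  set N : k → Submodule k V := fun μ => T.eigenspace μ with hN
  have hInd := T.eigenspaces_iSupIndep
  have hTop : ⨆ μ, N μ = ⊤ := by
    have h1 := Module.End.iSup_maxGenEigenspace_eq_top T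
    have h2 : ∀ μ : k, T.maxGenEigenspace μ = N μ := fun μ =>
      hss.isFinitelySemisimple.maxGenEigenspace_eq_eigenspace μ
    simp_rw [h2] at h1
    exact h1
  have hInt : DirectSum.IsInternal N :=
    DirectSum.isInternal_submodule_of_iSupIndep_of_iSup_eq_top hInd hTop
  have hFin : {μ | N μ ≠ ⊥}.Finite := WellFoundedGT.finite_ne_bot_of_iSupIndep hInd
  set s : Finset k := hFin.toFinset with hs
  have hMap : ∀ μ : k, Set.MapsTo T (N μ) (N μ) := by
    intro μ x hx
    simp only [hN, SetLike.mem_coe, Module.End.mem_eigenspace_iff] at hx ⊢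
    rw [hx, map_smul, hx]
  set d : k → ℕ := fun μ => Module.finrank k (N μ) with hd
  -- the restriction of T to an eigenspace is a scalar
  have hres : ∀ μ : k, T.restrict (hMap μ) = (μ • 1 : Module.End k (N μ)) := by
    intro μ
    ext x
    have hx := Module.End.mem_eigenspace_iff.mp x.2
    simp [LinearMap.restrict_apply, LinearMap.restrict_coe_apply, hx]
    exact hx
  have htr2 : (0 : k) = ∑ μ ∈ s, (d μ : k) * μ := by
    rw [← htr, LinearMap.trace_eq_sum_trace_restrict' hInt hFin hMap]
    refine Finset.sum_congr rfl fun μ _ => ?_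
    rw [hres μ, map_smul, LinearMap.trace_one]
    simp [hd, mul_comm]
  have htr1 : p = ∑ μ ∈ s, d μ := by
    have h1 : LinearMap.trace k V 1 = (p : k) := by rw [LinearMap.trace_one, hdim]
    have hMap1 : ∀ μ : k, Set.MapsTo (1 : Module.End k V) (N μ) (N μ) := fun μ x hx => hx
    have h2 := LinearMap.trace_eq_sum_trace_restrict' hInt hFin hMap1
    rw [h1] at h2
    have h3 : ∀ μ : k, (1 : Module.End k V).restrict (hMap1 μ) = (1 : Module.End k (N μ)) := by
      intro μ; ext x; simp [LinearMap.restrict_apply]; rfl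
    simp_rw [h3, LinearMap.trace_one] at h2
    have : ((p : ℕ) : k) = ((∑ μ ∈ s, d μ : ℕ) : k) := by push_cast; exact h2
    exact_mod_cast this
  have heig : ∀ μ ∈ s, μ ^ (2 * p) = 1 := by
    intro μ hμ
    have hne : N μ ≠ ⊥ := by simpa [hs] using hμ
    obtain ⟨v, hv, hv0⟩ := Submodule.exists_mem_ne_zero_of_ne_bot hne
    have h1 : (T ^ (2 * p)) v = μ ^ (2 * p) • v := eigen_pow_apply T μ _ hv
    rw [hT] at h1
    have : (μ ^ (2 * p) - 1) • v = 0 := by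
      rw [sub_smul, one_smul, ← h1, Module.End.one_apply, sub_self]
    rcases smul_eq_zero.mp this with h | h
    · exact sub_eq_zero.mp h
    · exact absurd h hv0
  -- conclusion helper
  have hconc : ∀ c : k, (∀ μ ∈ s, μ ^ p = c) → T ^ p = c • (1 : Module.End k V) := by
    intro c hall
    ext v
    have hv : v ∈ ⨆ μ, N μ := hTop ▸ Submodule.mem_top
    have hP : (T ^ p) v = c • v := by
      refine Submodule.iSup_induction N (motive := fun z => (T ^ p) z = c • z) hv
        (fun μ x hxμ => ?_) (by simp)
        (fun x y hx hy => by
          show (T ^ p) (x + y) = c • (x + y)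
          rw [map_add, hx, hy, smul_add])
      show (T ^ p) x = c • x
      by_cases hμ : μ ∈ s
      · rw [eigen_pow_apply T μ p hxμ, hall μ hμ]
      · have hb : N μ = ⊥ := by
          by_contra hb
          exact hμ (by simpa [hs] using hb)
        rw [hb, Submodule.mem_bot] at hxμ
        rw [hxμ]; simp
    simpa using hP
  -- primitive p-th root of unity
  haveI : NeZero ((p : ℕ) : k) := ⟨Nat.cast_ne_zero.mpr hpos.ne'⟩
  haveI : NeZero p := ⟨hpos.ne'⟩
  obtain ⟨ζ, hζ⟩ := HasEnoughRootsOfUnity.exists_primitiveRoot k p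
  -- decompose each eigenvalue
  have key : ∀ μ ∈ s, ∃ e : ℤ, ∃ i : ℕ, (e = 1 ∨ e = -1) ∧ μ ^ p = (e : k)
      ∧ i < p ∧ (e : k) * μ = ζ ^ i := by
    intro μ hμ
    have h2 : (μ ^ p) ^ 2 = 1 := by rw [← pow_mul, mul_comm]; exact heig μ hμ
    have h3 : (μ ^ p - 1) * (μ ^ p + 1) = 0 := by linear_combination h2
    rcases mul_eq_zero.mp h3 with h | h
    · have he : μ ^ p = 1 := sub_eq_zero.mp h
      obtain ⟨i, hi, hie⟩ := hζ.eq_pow_of_pow_eq_one he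
      exact ⟨1, i, Or.inl rfl, by simpa using he, hi, by simpa using hie.symm⟩
    · have he : μ ^ p = -1 := eq_neg_of_add_eq_zero_left h
      have hne : (-μ) ^ p = 1 := by rw [Odd.neg_pow hodd, he, neg_neg]
      obtain ⟨i, hi, hie⟩ := hζ.eq_pow_of_pow_eq_one hne
      refine ⟨-1, i, Or.inr rfl, by simpa using he, hi, ?_⟩
      rw [Int.cast_neg, Int.cast_one, neg_one_mul]
      exact hie.symm
  choose e jj he hμp hjlt hjeq using key
  set m : ℕ → ℤ := fun i =>
    ∑ x ∈ s.attach, if jj x.1 x.2 = i then e x.1 x.2 * (d x.1 : ℤ) else 0 with hm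
  have hmcast : ∀ i, ((m i : ℤ) : k)
      = ∑ x ∈ s.attach, if jj x.1 x.2 = i then ((e x.1 x.2 : ℤ) : k) * (d x.1 : k) else 0 := by
    intro i
    rw [hm]
    refine Eq.trans (by push_cast; rfl) (Finset.sum_congr rfl fun x _ => ?_)
    split <;> push_cast <;> ring
  have hee : ∀ (μ : k) (h : μ ∈ s), ((e μ h : ℤ) : k) * ((e μ h : ℤ) : k) = 1 := by
    intro μ h
    rcases he μ h with h1 | h1 <;> rw [h1] <;> norm_num
  have hA : ∑ i ∈ Finset.range p, (m i : k) * ζ ^ i = 0 := by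
    have step : ∑ i ∈ Finset.range p, (m i : k) * ζ ^ i
        = ∑ x ∈ s.attach, ((e x.1 x.2 : ℤ) : k) * (d x.1 : k) * ζ ^ (jj x.1 x.2) := by
      simp_rw [hmcast, Finset.sum_mul, ite_mul, zero_mul]
      rw [Finset.sum_comm]
      refine Finset.sum_congr rfl fun x _ => ?_
      rw [Finset.sum_ite_eq (Finset.range p) (jj x.1 x.2),
        if_pos (Finset.mem_range.mpr (hjlt x.1 x.2))]
    have step2 : ∀ x ∈ s.attach,
        ((e x.1 x.2 : ℤ) : k) * (d x.1 : k) * ζ ^ (jj x.1 x.2) = (d x.1 : k) * x.1 := by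
      intro x _
      rw [← hjeq x.1 x.2]
      have h4 : ((e x.1 x.2 : ℤ) : k) * (d x.1 : k) * (((e x.1 x.2 : ℤ) : k) * x.1)
          = (((e x.1 x.2 : ℤ) : k) * ((e x.1 x.2 : ℤ) : k)) * ((d x.1 : k) * x.1) := by ring
      rw [h4, hee, one_mul]
    rw [step, Finset.sum_congr rfl step2, Finset.sum_attach s (fun μ => (d μ : k) * μ), ← htr2]
  have hB : ∑ i ∈ Finset.range p, m i = ∑ x ∈ s.attach, e x.1 x.2 * (d x.1 : ℤ) := by
    rw [hm]
    rw [Finset.sum_comm]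
    refine Finset.sum_congr rfl fun x _ => ?_
    rw [Finset.sum_ite_eq (Finset.range p) (jj x.1 x.2),
      if_pos (Finset.mem_range.mpr (hjlt x.1 x.2))]
  have hsd : (p : ℤ) = ∑ x ∈ s.attach, (d x.1 : ℤ) := by
    rw [Finset.sum_attach s (fun μ => (d μ : ℤ))]
    exact_mod_cast htr1
  have hC : ∑ i ∈ Finset.range p, |m i| ≤ (p : ℤ) := by
    have habs : ∀ i, |m i| ≤ ∑ x ∈ s.attach, if jj x.1 x.2 = i then (d x.1 : ℤ) else 0 := by
      intro i
      rw [hm]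
      refine le_trans (Finset.abs_sum_le_sum_abs _ _) (Finset.sum_le_sum fun x _ => ?_)
      split
      · rw [abs_mul]
        rcases he x.1 x.2 with h1 | h1 <;> rw [h1] <;> simp
      · simp
    refine le_trans (Finset.sum_le_sum fun i _ => habs i) ?_
    rw [Finset.sum_comm]
    have hcollapse : ∀ x ∈ s.attach,
        (∑ i ∈ Finset.range p, if jj x.1 x.2 = i then (d x.1 : ℤ) else 0) = (d x.1 : ℤ) := by
      intro x _
      rw [Finset.sum_ite_eq (Finset.range p) (jj x.1 x.2),
        if_pos (Finset.mem_range.mpr (hjlt x.1 x.2))]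
    rw [Finset.sum_congr rfl hcollapse, ← hsd]
  have hconst := const_of_sum_zeta hp hζ m hA
  set c : ℤ := m (p - 1) with hc
  have hsum_c : ∑ i ∈ Finset.range p, m i = (p : ℤ) * c := by
    rw [Finset.sum_congr rfl hconst, Finset.sum_const, Finset.card_range, nsmul_eq_mul]
  have hsum_abs : ∑ i ∈ Finset.range p, |m i| = (p : ℤ) * |c| := by
    rw [Finset.sum_congr rfl (fun i hi => by rw [hconst i hi]), Finset.sum_const,
      Finset.card_range, nsmul_eq_mul]
  have hcle : |c| ≤ 1 := by
    by_contra hgt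
    push_neg at hgt
    have hp2 : (1 : ℤ) ≤ p := by exact_mod_cast hpos
    rw [hsum_abs] at hC
    nlinarith
  have hpc : (p : ℤ) * c = ∑ x ∈ s.attach, e x.1 x.2 * (d x.1 : ℤ) := by
    rw [← hsum_c, hB]
  have hd_ne : ∀ μ ∈ s, (d μ : ℤ) ≠ 0 := by
    intro μ hμ
    have hne : N μ ≠ ⊥ := by simpa [hs] using hμ
    intro h0
    have : d μ = 0 := by exact_mod_cast h0
    exact hne (Submodule.finrank_eq_zero.mp this)
  have hcases : c = -1 ∨ c = 0 ∨ c = 1 := by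
    have := abs_le.mp hcle
    omega
  rcases hcases with hc1 | hc1 | hc1
  · -- c = -1 : all eigenvalues satisfy μ ^ p = -1
    right
    have hzero : ∑ x ∈ s.attach, (1 + e x.1 x.2) * (d x.1 : ℤ) = 0 := by
      simp_rw [add_mul, one_mul]
      rw [Finset.sum_add_distrib, ← hpc, ← hsd, hc1]
      ring
    have hnonneg : ∀ x ∈ s.attach, 0 ≤ (1 + e x.1 x.2) * (d x.1 : ℤ) := by
      intro x _
      rcases he x.1 x.2 with h1 | h1 <;> rw [h1] <;> positivity
    have hall0 := (Finset.sum_eq_zero_iff_of_nonneg hnonneg).mp hzero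
    have hall : ∀ μ ∈ s, μ ^ p = (-1 : k) := by
      intro μ hμ
      have hx := hall0 ⟨μ, hμ⟩ (Finset.mem_attach _ _)
      rcases mul_eq_zero.mp hx with h1 | h1
      · have h1' : (1 : ℤ) + e μ hμ = 0 := h1
        have he1 : e μ hμ = -1 := by omega
        have := hμp μ hμ
        rw [he1] at this
        simpa using this
      · exact absurd h1 (hd_ne μ hμ)
    rw [hconc (-1) hall]
    simp
  · -- c = 0 : impossible by parity
    exfalso
    have h0 : ∑ x ∈ s.attach, e x.1 x.2 * (d x.1 : ℤ) = 0 := by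
      rw [← hpc, hc1, mul_zero]
    have hmod : ((∑ x ∈ s.attach, e x.1 x.2 * (d x.1 : ℤ) : ℤ) : ZMod 2) = 0 := by
      rw [h0]; simp
    push_cast at hmod
    have he2 : ∀ x ∈ s.attach,
        ((e x.1 x.2 : ℤ) : ZMod 2) * (d x.1 : ZMod 2) = (d x.1 : ZMod 2) := by
      intro x _
      rcases he x.1 x.2 with h1 | h1 <;> rw [h1]
      · norm_num
      · push_cast
        rw [neg_one_mul]
        exact CharTwo.neg_eq _
    rw [Finset.sum_congr rfl he2, Finset.sum_attach s (fun μ => (d μ : ZMod 2))] at hmod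
    have hps : ((∑ μ ∈ s, d μ : ℕ) : ZMod 2) = 0 := by push_cast; exact hmod
    rw [← htr1] at hps
    have hodd2 : p % 2 = 1 := Nat.odd_iff.mp hodd
    rw [← Nat.mod_add_div p 2, hodd2] at hps
    push_cast at hps
    have h2 : (2 : ZMod 2) = 0 := by decide
    rw [h2, zero_mul, add_zero] at hps
    exact one_ne_zero hps
  · -- c = 1 : all eigenvalues satisfy μ ^ p = 1
    left
    have hzero : ∑ x ∈ s.attach, (1 - e x.1 x.2) * (d x.1 : ℤ) = 0 := by
      simp_rw [sub_mul, one_mul]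
      rw [Finset.sum_sub_distrib, ← hpc, ← hsd, hc1]
      ring
    have hnonneg : ∀ x ∈ s.attach, 0 ≤ (1 - e x.1 x.2) * (d x.1 : ℤ) := by
      intro x _
      rcases he x.1 x.2 with h1 | h1 <;> rw [h1] <;> norm_num
    have hall0 := (Finset.sum_eq_zero_iff_of_nonneg hnonneg).mp hzero
    have hall : ∀ μ ∈ s, μ ^ p = (1 : k) := by
      intro μ hμ
      have hx := hall0 ⟨μ, hμ⟩ (Finset.mem_attach _ _)
      rcases mul_eq_zero.mp hx with h1 | h1
      · have h1' : (1 : ℤ) - e μ hμ = 0 := h1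
        have he1 : e μ hμ = 1 := by omega
        have := hμp μ hμ
        rw [he1] at this
        simpa using this
      · exact absurd h1 (hd_ne μ hμ)
    rw [hconc 1 hall]
    simp
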